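/- Let K be a field of characteristic 0 or characteristic p > max{r, s}, and V, W finite-dimensional K-vector spaces. Every φ ∈ End_K(V^{⊗r} ⊗ W^{⊗s}) that commutes with the place-permutation action of Σ_r on the first r factors and of Σ_s on the last s factors is a linear combination of maps of the form ψ_V^{⊗r} ⊗ ψ_W^{⊗s} with ψ_V ∈ End_K(V) and ψ_W ∈ End_K(W). -/

import Mathlib

set_option maxHeartbeats 1000000
set_option synthInstance.maxHeartbeats 400000

open TensorProduct PiTensorProduct

section polar
variable {K : Type*} [Field K] {U : Type*} [AddCommGroup U] [Module K U] {n : ℕ}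

private lemma aux_ie (T : Finset (Fin n)) :
    ∑ S : Finset (Fin n), (if T ⊆ S then ((-1 : K) ^ (n - S.card)) else 0)
      = if T = Finset.univ then 1 else 0 := by
  classical
  rw [Finset.sum_ite, Finset.sum_const_zero, add_zero]
  have key : ∑ S ∈ Finset.univ.filter (fun S => T ⊆ S), ((-1 : K) ^ (n - S.card))
      = ∑ S' ∈ Tᶜ.powerset, ((-1 : K) ^ (Tᶜ.card - S'.card)) := by
    refine Finset.sum_nbij' (fun S => S \ T) (fun S' => S' ∪ T) ?_ ?_ ?_ ?_ ?_
    · intro S hS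
      simp only [Finset.mem_powerset]
      intro x hx
      simp only [Finset.mem_sdiff] at hx
      simpa using hx.2
    · intro S' hS'
      simp only [Finset.mem_filter, Finset.mem_univ, true_and]
      exact Finset.subset_union_right
    · intro S hS
      simp only [Finset.mem_filter, Finset.mem_univ, true_and] at hS
      exact Finset.sdiff_union_of_subset hS
    · intro S' hS'
      simp only [Finset.mem_powerset] at hS'
      have hd : Disjoint S' T := Finset.disjoint_left.mpr fun x hx => by
        have := hS' hx; simp only [Finset.mem_compl] at this; exact this
      exact Finset.union_sdiff_cancel_right hd
    · intro S hS
      simp only [Finset.mem_filter, Finset.mem_univ, true_and] at hS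
      show (-1 : K) ^ (n - S.card) = (-1 : K) ^ (Tᶜ.card - (S \ T).card)
      congr 1
      have h1 : (S \ T).card = S.card - T.card := Finset.card_sdiff_of_subset hS
      have h2 : T.card ≤ S.card := Finset.card_le_card hS
      have h3 : Tᶜ.card = n - T.card := by
        rw [Finset.card_compl]; simp
      have h4 : S.card ≤ n := by
        simpa using Finset.card_le_univ S
      omega
  rw [key]
  have step : ∀ S' ∈ Tᶜ.powerset,
      (-1 : K) ^ (Tᶜ.card - S'.card) = (-1) ^ Tᶜ.card * (-1) ^ S'.card := by
    intro S' hS'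
    have hm : S'.card ≤ Tᶜ.card := Finset.card_le_card (Finset.mem_powerset.1 hS')
    calc (-1 : K) ^ (Tᶜ.card - S'.card)
        = (-1 : K) ^ (Tᶜ.card - S'.card) * ((-1) ^ S'.card * (-1) ^ S'.card) := by
          rw [← pow_add, ← two_mul, pow_mul, neg_one_sq, one_pow, mul_one]
      _ = ((-1 : K) ^ (Tᶜ.card - S'.card) * (-1) ^ S'.card) * (-1) ^ S'.card := by ring
      _ = (-1 : K) ^ Tᶜ.card * (-1) ^ S'.card := by
          rw [← pow_add, Nat.sub_add_cancel hm]
  rw [Finset.sum_congr rfl step, ← Finset.mul_sum]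
  have hps : (∑ S' ∈ Tᶜ.powerset, (-1 : K) ^ S'.card)
      = if Tᶜ = ∅ then 1 else 0 := by
    have hz := Finset.sum_powerset_neg_one_pow_card (x := Tᶜ)
    calc (∑ S' ∈ Tᶜ.powerset, (-1 : K) ^ S'.card)
        = ((∑ S' ∈ Tᶜ.powerset, (-1 : ℤ) ^ S'.card : ℤ) : K) := by push_cast; rfl
      _ = _ := by rw [hz]; split <;> simp
  rw [hps]
  by_cases hT : T = Finset.univ
  · simp [hT]
  · have hne : Tᶜ ≠ ∅ := fun h => hT ((Finset.compl_eq_empty_iff T).mp h)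
    simp [hT, hne]

private lemma polar_mem (a : Fin n → U) :
    (∑ σ : Equiv.Perm (Fin n), PiTensorProduct.tprod K (fun i => a (σ i)))
      ∈ Submodule.span K {t : ⨂[K] _ : Fin n, U | ∃ u, t = PiTensorProduct.tprod K (fun _ => u)} := by
  classical
  have expand : ∀ S : Finset (Fin n),
      PiTensorProduct.tprod K (fun _ : Fin n => ∑ j ∈ S, a j)
        = ∑ f ∈ Fintype.piFinset (fun _ : Fin n => S), PiTensorProduct.tprod K (fun i => a (f i)) :=
    fun S => MultilinearMap.map_sum_finset (PiTensorProduct.tprod K) (fun _ j => a j) (fun _ => S)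
  have key : (∑ S : Finset (Fin n),
        ((-1 : K) ^ (n - S.card)) • PiTensorProduct.tprod K (fun _ : Fin n => ∑ j ∈ S, a j))
      = ∑ σ : Equiv.Perm (Fin n), PiTensorProduct.tprod K (fun i => a (σ i)) := by
    calc ∑ S : Finset (Fin n), ((-1 : K) ^ (n - S.card)) • PiTensorProduct.tprod K (fun _ : Fin n => ∑ j ∈ S, a j)
        = ∑ S : Finset (Fin n), ∑ f ∈ Fintype.piFinset (fun _ : Fin n => S),
            ((-1 : K) ^ (n - S.card)) • PiTensorProduct.tprod K (fun i => a (f i)) := by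
          simp_rw [expand, Finset.smul_sum]
      _ = ∑ S : Finset (Fin n), ∑ f : Fin n → Fin n,
            (if Finset.image f Finset.univ ⊆ S then ((-1 : K) ^ (n - S.card)) else 0)
              • PiTensorProduct.tprod K (fun i => a (f i)) := by
          refine Finset.sum_congr rfl fun S _ => ?_
          rw [← Finset.univ_inter (Fintype.piFinset (fun _ : Fin n => S)), ← Finset.sum_ite_mem]
          refine Finset.sum_congr rfl fun f _ => ?_
          rw [ite_smul, zero_smul]
          refine if_congr ?_ rfl rfl
          simp [Fintype.mem_piFinset, Finset.image_subset_iff]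
      _ = ∑ f : Fin n → Fin n,
            (∑ S : Finset (Fin n),
              if Finset.image f Finset.univ ⊆ S then ((-1 : K) ^ (n - S.card)) else 0)
              • PiTensorProduct.tprod K (fun i => a (f i)) := by
          rw [Finset.sum_comm]
          exact Finset.sum_congr rfl fun f _ => (Finset.sum_smul).symm
      _ = ∑ f : Fin n → Fin n,
            (if Finset.image f Finset.univ = Finset.univ then (1 : K) else 0)
              • PiTensorProduct.tprod K (fun i => a (f i)) := by
          simp_rw [aux_ie]
      _ = ∑ σ : Equiv.Perm (Fin n), PiTensorProduct.tprod K (fun i => a (σ i)) := by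
          simp_rw [ite_smul, one_smul, zero_smul]
          rw [← Finset.sum_filter]
          have himg : Finset.univ.filter
              (fun f : Fin n → Fin n => Finset.image f Finset.univ = Finset.univ)
              = Finset.univ.image (fun σ : Equiv.Perm (Fin n) => ⇑σ) := by
            ext f
            simp only [Finset.mem_filter, Finset.mem_univ, true_and, Finset.mem_image]
            constructor
            · intro h
              have hsurj : Function.Surjective f := fun y => by
                have : y ∈ Finset.image f Finset.univ := by
                  rw [h]; exact Finset.mem_univ y
                simpa using this
              exact ⟨Equiv.ofBijective f (Finite.surjective_iff_bijective.mp hsurj), rfl⟩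
            · rintro ⟨σ, -, rfl⟩
              ext y
              simp only [Finset.mem_image, Finset.mem_univ, true_and, iff_true]
              exact ⟨σ.symm y, σ.apply_symm_apply y⟩
          rw [himg, Finset.sum_image (fun σ _ τ _ h => Equiv.coe_fn_injective h)]
  rw [← key]
  exact Submodule.sum_mem _ fun S _ =>
    Submodule.smul_mem _ _ (Submodule.subset_span ⟨_, rfl⟩)

end polar

section surj
variable {K : Type*} [Field K] {U : Type*} [AddCommGroup U] [Module K U] {n : ℕ}

private theorem pit_finite [FiniteDimensional K U] (n : ℕ) :
    Module.Finite K (⨂[K] _ : Fin n, U) := by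
  induction n with
  | zero =>
    exact Module.Finite.equiv (isEmptyEquiv (Fin 0) : (⨂[K] _ : Fin 0, U) ≃ₗ[K] K).symm
  | succ m ih =>
    haveI := ih
    haveI : Module.Finite K (⨂[K] _ : Fin 1, U) :=
      Module.Finite.equiv (subsingletonEquiv (0 : Fin 1) : (⨂[K] _ : Fin 1, U) ≃ₗ[K] U).symm
    have e : (⨂[K] _ : Fin (m + 1), U) ≃ₗ[K] (⨂[K] _ : Fin m, U) ⊗[K] (⨂[K] _ : Fin 1, U) :=
      (reindex K (fun _ : Fin (m + 1) => U) (finSumFinEquiv (m := m) (n := 1)).symm).trans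
        (tmulEquiv K U).symm
    exact Module.Finite.equiv e.symm

private lemma mlin_expand {ι : Type*} [Fintype ι] [DecidableEq ι] (b : Module.Basis ι K U)
    (g : MultilinearMap K (fun _ : Fin n => U) K) :
    g = ∑ J : Fin n → ι, g (fun i => b (J i)) •
        (MultilinearMap.mkPiAlgebra K (Fin n) K).compLinearMap (fun i => b.coord (J i)) := by
  refine Module.Basis.ext_multilinear (fun _ => b) fun M => ?_
  rw [MultilinearMap.sum_apply]
  have term : ∀ J : Fin n → ι,
      (g (fun i => b (J i)) •
        (MultilinearMap.mkPiAlgebra K (Fin n) K).compLinearMap (fun i => b.coord (J i)))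
        (fun i => b (M i))
      = if J = M then g (fun i => b (M i)) else 0 := by
    intro J
    rw [MultilinearMap.smul_apply, MultilinearMap.compLinearMap_apply,
      MultilinearMap.mkPiAlgebra_apply]
    have hcoord : ∀ i, (b.coord (J i)) (b (M i)) = if M i = J i then 1 else 0 := by
      intro i
      rw [Module.Basis.coord_apply, Module.Basis.repr_self, Finsupp.single_apply]
    simp_rw [hcoord]
    rw [Finset.prod_boole]
    have : (∀ i ∈ Finset.univ, M i = J i) ↔ J = M := by
      constructor
      · intro h; ext i; exact (h i (Finset.mem_univ i)).symm
      · rintro rfl i _; rfl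
    by_cases h : J = M
    · subst h; simp [this]
    · rw [if_neg (fun hh => h (this.mp hh)), smul_zero, if_neg h]
  rw [Finset.sum_congr rfl fun J _ => term J, Finset.sum_ite_eq' Finset.univ M]
  simp

private lemma piMap_dual (φ : Fin n → Module.Dual K U) (v : Fin n → U) :
    PiTensorProduct.map (fun i => dualTensorHom K U U (φ i ⊗ₜ[K] v i))
      = dualTensorHom K (⨂[K] _ : Fin n, U) (⨂[K] _ : Fin n, U)
          ((PiTensorProduct.lift
              ((MultilinearMap.mkPiAlgebra K (Fin n) K).compLinearMap φ)) ⊗ₜ[K]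
            PiTensorProduct.tprod K v) := by
  ext x
  simp only [LinearMap.compMultilinearMap_apply, PiTensorProduct.map_tprod,
    dualTensorHom_apply, PiTensorProduct.lift.tprod,
    MultilinearMap.compLinearMap_apply, MultilinearMap.mkPiAlgebra_apply]
  exact MultilinearMap.map_smul_univ (PiTensorProduct.tprod K) (fun i => φ i (x i)) v

private theorem L1_surj [FiniteDimensional K U] (n : ℕ) :
    Function.Surjective (piTensorHomMap :
      (⨂[K] _ : Fin n, (U →ₗ[K] U)) →ₗ[K]
        (⨂[K] _ : Fin n, U) →ₗ[K] (⨂[K] _ : Fin n, U)) := by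
  classical
  haveI := pit_finite (K := K) (U := U) n
  rw [← LinearMap.range_eq_top, eq_top_iff]
  rintro f -
  -- express f via dualTensorHom
  set TU := (⨂[K] _ : Fin n, U)
  obtain ⟨x, rfl⟩ : ∃ x, dualTensorHom K TU TU x = f := by
    obtain ⟨x, hx⟩ := (dualTensorHomEquivOfBasis
      (Module.Free.chooseBasis K TU) (N := TU)).surjective f
    exact ⟨x, by rw [← dualTensorHomEquivOfBasis_apply (Module.Free.chooseBasis K TU), hx]⟩
  induction x using TensorProduct.induction_on with
  | zero => rw [map_zero]; exact zero_mem _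
  | add x y hx hy => rw [map_add]; exact add_mem hx hy
  | tmul G t =>
    induction t using PiTensorProduct.induction_on with
    | add t₁ t₂ h₁ h₂ =>
      rw [tmul_add, map_add]; exact add_mem h₁ h₂
    | smul_tprod c v =>
      rw [tmul_smul, map_smul]
      refine Submodule.smul_mem _ _ ?_
      set b := Module.finBasis K U
      set g := PiTensorProduct.lift.symm G with hgdef
      have hG : G = PiTensorProduct.lift g := (PiTensorProduct.lift.apply_symm_apply G).symm
      rw [hG, mlin_expand b g, map_sum]
      simp_rw [map_smul]
      rw [sum_tmul]
      rw [map_sum]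
      simp_rw [← smul_tmul', map_smul]
      refine Submodule.sum_mem _ fun J _ => ?_
      refine Submodule.smul_mem _ _ ?_
      rw [← piMap_dual (fun i => b.coord (J i)) v]
      exact ⟨PiTensorProduct.tprod K (fun i => dualTensorHom K U U ((b.coord (J i)) ⊗ₜ[K] v i)),
        piTensorHomMap_tprod_eq_map _⟩
end surj

theorem stmt_19 (K : Type*) [Field K] (r s : ℕ)
    (hchar : CharP K 0 ∨ ∃ p : ℕ, CharP K p ∧ max r s < p)
    (V W : Type*) [AddCommGroup V] [Module K V] [FiniteDimensional K V]
    [AddCommGroup W] [Module K W] [FiniteDimensional K W]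
    (φ : Module.End K
      ((PiTensorProduct K (fun _ : Fin r => V)) ⊗[K] (PiTensorProduct K (fun _ : Fin s => W))))
    (hσ : ∀ σ : Equiv.Perm (Fin r),
      φ ∘ₗ LinearMap.rTensor (PiTensorProduct K (fun _ : Fin s => W))
          (PiTensorProduct.reindex K (fun _ : Fin r => V) σ).toLinearMap
        = LinearMap.rTensor (PiTensorProduct K (fun _ : Fin s => W))
            (PiTensorProduct.reindex K (fun _ : Fin r => V) σ).toLinearMap ∘ₗ φ)
    (hτ : ∀ τ : Equiv.Perm (Fin s),
      φ ∘ₗ LinearMap.lTensor (PiTensorProduct K (fun _ : Fin r => V))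
          (PiTensorProduct.reindex K (fun _ : Fin s => W) τ).toLinearMap
        = LinearMap.lTensor (PiTensorProduct K (fun _ : Fin r => V))
            (PiTensorProduct.reindex K (fun _ : Fin s => W) τ).toLinearMap ∘ₗ φ) :
    φ ∈ Submodule.span K
      {f | ∃ (ψV : Module.End K V) (ψW : Module.End K W),
        f = TensorProduct.map
              (PiTensorProduct.map (fun _ : Fin r => ψV))
              (PiTensorProduct.map (fun _ : Fin s => ψW))} := by
  classical
  -- nonvanishing of the factorials
  have hNK : ((r.factorial * s.factorial : ℕ) : K) ≠ 0 := by
    rcases hchar with h0 | ⟨p, hp, hlt⟩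
    · haveI := h0
      haveI : CharZero K := CharP.charP_to_charZero K
      exact Nat.cast_ne_zero.mpr
        (Nat.mul_ne_zero r.factorial_ne_zero s.factorial_ne_zero)
    · haveI := hp
      have hr : r < p := lt_of_le_of_lt (le_max_left r s) hlt
      have hs : s < p := lt_of_le_of_lt (le_max_right r s) hlt
      have hpp : p.Prime := (CharP.char_is_prime_or_zero K p).resolve_right (by omega)
      rw [Ne, CharP.cast_eq_zero_iff K p]
      intro hdvd
      rcases (Nat.Prime.dvd_mul hpp).mp hdvd with h | h
      · have : p ≤ r := (Nat.Prime.dvd_factorial hpp).mp h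
        omega
      · have : p ≤ s := (Nat.Prime.dvd_factorial hpp).mp h
        omega
  haveI : Module.Finite K (PiTensorProduct K (fun _ : Fin r => V)) := pit_finite r
  haveI : Module.Finite K (PiTensorProduct K (fun _ : Fin s => W)) := pit_finite s
  set TV := PiTensorProduct K (fun _ : Fin r => V) with hTV
  set TW := PiTensorProduct K (fun _ : Fin s => W) with hTW
  set L1 : (⨂[K] _ : Fin r, (V →ₗ[K] V)) →ₗ[K] (TV →ₗ[K] TV) := piTensorHomMap with hL1
  set L2 : (⨂[K] _ : Fin s, (W →ₗ[K] W)) →ₗ[K] (TW →ₗ[K] TW) := piTensorHomMap with hL2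
  set E : ((⨂[K] _ : Fin r, (V →ₗ[K] V)) ⊗[K] (⨂[K] _ : Fin s, (W →ₗ[K] W))) →ₗ[K]
      (TV ⊗[K] TW →ₗ[K] TV ⊗[K] TW) :=
    (homTensorHomMap (RingHom.id K) TV TW TV TW) ∘ₗ (TensorProduct.map L1 L2) with hE
  have hEpure : ∀ (f : Fin r → (V →ₗ[K] V)) (h : Fin s → (W →ₗ[K] W)),
      E ((PiTensorProduct.tprod K f) ⊗ₜ[K] (PiTensorProduct.tprod K h))
        = TensorProduct.map (PiTensorProduct.map f) (PiTensorProduct.map h) := by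
    intro f h
    simp only [hE, LinearMap.comp_apply, TensorProduct.map_tmul, hL1, hL2,
      homTensorHomMap_apply]
    rw [piTensorHomMap_tprod_eq_map, piTensorHomMap_tprod_eq_map]
  have hHsurj : Function.Surjective (homTensorHomMap (RingHom.id K) TV TW TV TW) := by
    intro f
    obtain ⟨z, hz⟩ := (homTensorHomEquiv K TV TW TV TW).surjective f
    exact ⟨z, by rw [← homTensorHomEquiv_apply]; exact hz⟩
  have hEsurj : Function.Surjective E :=
    hHsurj.comp (TensorProduct.map_surjective (L1_surj r) (L1_surj s))
  obtain ⟨x, hx⟩ := hEsurj φ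
  -- cancellation of reindexing
  have cancelV : ∀ (σ : Equiv.Perm (Fin r)) (u : TV),
      (PiTensorProduct.reindex K (fun _ : Fin r => V) σ)
        ((PiTensorProduct.reindex K (fun _ : Fin r => V) σ.symm) u) = u := by
    intro σ u
    induction u using PiTensorProduct.induction_on with
    | smul_tprod c f =>
      rw [map_smul, map_smul, PiTensorProduct.reindex_tprod, PiTensorProduct.reindex_tprod]
      congr 1
      exact congrArg _ (funext fun i => by rw [Equiv.symm_symm, Equiv.apply_symm_apply])
    | add u₁ u₂ h₁ h₂ => rw [map_add, map_add, h₁, h₂]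
  have cancelW : ∀ (τ : Equiv.Perm (Fin s)) (w : TW),
      (PiTensorProduct.reindex K (fun _ : Fin s => W) τ)
        ((PiTensorProduct.reindex K (fun _ : Fin s => W) τ.symm) w) = w := by
    intro τ w
    induction w using PiTensorProduct.induction_on with
    | smul_tprod c f =>
      rw [map_smul, map_smul, PiTensorProduct.reindex_tprod, PiTensorProduct.reindex_tprod]
      congr 1
      exact congrArg _ (funext fun i => by rw [Equiv.symm_symm, Equiv.apply_symm_apply])
    | add w₁ w₂ h₁ h₂ => rw [map_add, map_add, h₁, h₂]
  -- conjugation identities on the pi tensor factors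
  have conjA : ∀ (aa : Fin r → (V →ₗ[K] V)) (σ : Equiv.Perm (Fin r)),
      PiTensorProduct.map (fun i => aa (σ.symm i))
        = (PiTensorProduct.reindex K (fun _ : Fin r => V) σ).toLinearMap
            ∘ₗ PiTensorProduct.map aa
            ∘ₗ (PiTensorProduct.reindex K (fun _ : Fin r => V) σ.symm).toLinearMap := by
    intro aa σ
    ext xs
    simp only [LinearMap.compMultilinearMap_apply, PiTensorProduct.map_tprod,
      LinearMap.comp_apply, LinearEquiv.coe_coe, PiTensorProduct.reindex_tprod]
    exact congrArg _ (funext fun i => by simp)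
  have conjB : ∀ (bb : Fin s → (W →ₗ[K] W)) (τ : Equiv.Perm (Fin s)),
      PiTensorProduct.map (fun i => bb (τ.symm i))
        = (PiTensorProduct.reindex K (fun _ : Fin s => W) τ).toLinearMap
            ∘ₗ PiTensorProduct.map bb
            ∘ₗ (PiTensorProduct.reindex K (fun _ : Fin s => W) τ.symm).toLinearMap := by
    intro bb τ
    ext xs
    simp only [LinearMap.compMultilinearMap_apply, PiTensorProduct.map_tprod,
      LinearMap.comp_apply, LinearEquiv.coe_coe, PiTensorProduct.reindex_tprod]
    exact congrArg _ (funext fun i => by simp)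
  -- the key equivariance property of E
  have keyST : ∀ (σ : Equiv.Perm (Fin r)) (τ : Equiv.Perm (Fin s)) z,
      E (TensorProduct.map
          (PiTensorProduct.reindex K (fun _ : Fin r => (V →ₗ[K] V)) σ).toLinearMap
          (PiTensorProduct.reindex K (fun _ : Fin s => (W →ₗ[K] W)) τ).toLinearMap z)
        = (TensorProduct.map
              (PiTensorProduct.reindex K (fun _ : Fin r => V) σ).toLinearMap
              (PiTensorProduct.reindex K (fun _ : Fin s => W) τ).toLinearMap) ∘ₗ (E z) ∘ₗ
          (TensorProduct.map
              (PiTensorProduct.reindex K (fun _ : Fin r => V) σ.symm).toLinearMap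
              (PiTensorProduct.reindex K (fun _ : Fin s => W) τ.symm).toLinearMap) := by
    intro σ τ z
    induction z using TensorProduct.induction_on with
    | zero => simp
    | add z₁ z₂ h₁ h₂ =>
      simp only [map_add, h₁, h₂, LinearMap.add_comp, LinearMap.comp_add]
    | tmul u w =>
      rw [TensorProduct.map_tmul]
      induction u using PiTensorProduct.induction_on with
      | add u₁ u₂ h₁ h₂ =>
        simp only [map_add, TensorProduct.add_tmul, h₁, h₂,
          LinearMap.add_comp, LinearMap.comp_add]
      | smul_tprod c aa =>
        induction w using PiTensorProduct.induction_on with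
        | add w₁ w₂ h₁ h₂ =>
          simp only [map_add, TensorProduct.tmul_add, h₁, h₂,
            LinearMap.add_comp, LinearMap.comp_add]
        | smul_tprod d bb =>
          simp only [LinearEquiv.coe_coe, PiTensorProduct.reindex_tprod,
            TensorProduct.tmul_smul, ← TensorProduct.smul_tmul', map_smul, smul_smul,
            LinearMap.comp_smul, LinearMap.smul_comp]
          rw [hEpure, hEpure, conjA aa σ, conjB bb τ,
            TensorProduct.map_comp, TensorProduct.map_comp]
  -- pointwise invariance of φ under conjugation
  have collapse : ∀ (σ : Equiv.Perm (Fin r)) (τ : Equiv.Perm (Fin s)) (w : TV ⊗[K] TW),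
      TensorProduct.map
          (PiTensorProduct.reindex K (fun _ : Fin r => V) σ).toLinearMap
          (PiTensorProduct.reindex K (fun _ : Fin s => W) τ).toLinearMap
        (LinearMap.lTensor TV
          (PiTensorProduct.reindex K (fun _ : Fin s => W) τ.symm).toLinearMap
          (LinearMap.rTensor TW
            (PiTensorProduct.reindex K (fun _ : Fin r => V) σ.symm).toLinearMap w)) = w := by
    intro σ τ w
    induction w using TensorProduct.induction_on with
    | zero => simp
    | add w₁ w₂ h₁ h₂ => simp only [map_add, h₁, h₂]
    | tmul u v =>
      rw [LinearMap.rTensor_tmul, LinearMap.lTensor_tmul, TensorProduct.map_tmul]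
      simp only [LinearEquiv.coe_coe]
      rw [cancelV, cancelW]
  have hXcomm : ∀ (σ : Equiv.Perm (Fin r)) (τ : Equiv.Perm (Fin s)) (z : TV ⊗[K] TW),
      TensorProduct.map
          (PiTensorProduct.reindex K (fun _ : Fin r => V) σ).toLinearMap
          (PiTensorProduct.reindex K (fun _ : Fin s => W) τ).toLinearMap
        (φ (TensorProduct.map
            (PiTensorProduct.reindex K (fun _ : Fin r => V) σ.symm).toLinearMap
            (PiTensorProduct.reindex K (fun _ : Fin s => W) τ.symm).toLinearMap z)) = φ z := by
    intro σ τ z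
    have hmap : TensorProduct.map
        (PiTensorProduct.reindex K (fun _ : Fin r => V) σ.symm).toLinearMap
        (PiTensorProduct.reindex K (fun _ : Fin s => W) τ.symm).toLinearMap z
        = LinearMap.lTensor TV
            (PiTensorProduct.reindex K (fun _ : Fin s => W) τ.symm).toLinearMap
            (LinearMap.rTensor TW
              (PiTensorProduct.reindex K (fun _ : Fin r => V) σ.symm).toLinearMap z) := by
      rw [← LinearMap.lTensor_comp_rTensor]; rfl
    rw [hmap]
    have h1 := LinearMap.congr_fun (hτ τ.symm)
      (LinearMap.rTensor TW
        (PiTensorProduct.reindex K (fun _ : Fin r => V) σ.symm).toLinearMap z)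
    simp only [LinearMap.comp_apply] at h1
    rw [h1]
    have h2 := LinearMap.congr_fun (hσ σ.symm) z
    simp only [LinearMap.comp_apply] at h2
    rw [h2]
    exact collapse σ τ (φ z)
  have hpowV : ∀ u : ⨂[K] _ : Fin r, (V →ₗ[K] V),
      (∑ σ : Equiv.Perm (Fin r),
          (PiTensorProduct.reindex K (fun _ : Fin r => (V →ₗ[K] V)) σ) u)
        ∈ Submodule.span K
          {t : ⨂[K] _ : Fin r, (V →ₗ[K] V) |
            ∃ ψ : (V →ₗ[K] V), t = PiTensorProduct.tprod K (fun _ => ψ)} := by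
    intro u
    induction u using PiTensorProduct.induction_on with
    | smul_tprod c aa =>
      simp only [map_smul, ← Finset.smul_sum]
      refine Submodule.smul_mem _ _ ?_
      simp only [PiTensorProduct.reindex_tprod]
      have hswap : (∑ σ : Equiv.Perm (Fin r),
          PiTensorProduct.tprod K (fun i => aa (σ.symm i)))
          = ∑ σ : Equiv.Perm (Fin r), PiTensorProduct.tprod K (fun i => aa (σ i)) :=
        Fintype.sum_equiv (Equiv.inv (Equiv.Perm (Fin r))) _ _ (fun σ => rfl)
      rw [hswap]
      exact polar_mem aa
    | add u₁ u₂ h₁ h₂ =>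
      simp only [map_add, Finset.sum_add_distrib]
      exact Submodule.add_mem _ h₁ h₂
  have hpowW : ∀ w : ⨂[K] _ : Fin s, (W →ₗ[K] W),
      (∑ τ : Equiv.Perm (Fin s),
          (PiTensorProduct.reindex K (fun _ : Fin s => (W →ₗ[K] W)) τ) w)
        ∈ Submodule.span K
          {t : ⨂[K] _ : Fin s, (W →ₗ[K] W) |
            ∃ ψ : (W →ₗ[K] W), t = PiTensorProduct.tprod K (fun _ => ψ)} := by
    intro w
    induction w using PiTensorProduct.induction_on with
    | smul_tprod c bb =>
      simp only [map_smul, ← Finset.smul_sum]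
      refine Submodule.smul_mem _ _ ?_
      simp only [PiTensorProduct.reindex_tprod]
      have hswap : (∑ τ : Equiv.Perm (Fin s),
          PiTensorProduct.tprod K (fun i => bb (τ.symm i)))
          = ∑ τ : Equiv.Perm (Fin s), PiTensorProduct.tprod K (fun i => bb (τ i)) :=
        Fintype.sum_equiv (Equiv.inv (Equiv.Perm (Fin s))) _ _ (fun τ => rfl)
      rw [hswap]
      exact polar_mem bb
    | add w₁ w₂ h₁ h₂ =>
      simp only [map_add, Finset.sum_add_distrib]
      exact Submodule.add_mem _ h₁ h₂
  -- the symmetrized element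
  set y := ∑ σ : Equiv.Perm (Fin r), ∑ τ : Equiv.Perm (Fin s),
      (TensorProduct.map
          (PiTensorProduct.reindex K (fun _ : Fin r => (V →ₗ[K] V)) σ).toLinearMap
          (PiTensorProduct.reindex K (fun _ : Fin s => (W →ₗ[K] W)) τ).toLinearMap) x
    with hy
  have hEy : E y = (r.factorial * s.factorial : ℕ) • φ := by
    rw [hy]
    have hterm : ∀ (σ : Equiv.Perm (Fin r)) (τ : Equiv.Perm (Fin s)),
        E (TensorProduct.map
          (PiTensorProduct.reindex K (fun _ : Fin r => (V →ₗ[K] V)) σ).toLinearMap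
          (PiTensorProduct.reindex K (fun _ : Fin s => (W →ₗ[K] W)) τ).toLinearMap x)
          = φ := by
      intro σ τ
      rw [keyST σ τ x, hx]
      apply LinearMap.ext
      intro z
      simp only [LinearMap.comp_apply]
      exact hXcomm σ τ z
    simp only [map_sum]
    simp_rw [hterm]
    rw [Finset.sum_const, Finset.sum_const, Finset.card_univ, Fintype.card_perm,
      Fintype.card_fin, smul_smul, Finset.card_univ, Fintype.card_perm, Fintype.card_fin]
  -- y lies in the span of pure power tensors
  have hyP : y ∈ Submodule.span K
      {t : (⨂[K] _ : Fin r, (V →ₗ[K] V)) ⊗[K] (⨂[K] _ : Fin s, (W →ₗ[K] W)) |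
        ∃ (ψV : (V →ₗ[K] V)) (ψW : (W →ₗ[K] W)),
          t = (PiTensorProduct.tprod K (fun _ : Fin r => ψV)) ⊗ₜ[K]
              (PiTensorProduct.tprod K (fun _ : Fin s => ψW))} := by
    rw [hy]
    -- prove for arbitrary x by induction
    clear hEy hy hx y
    induction x using TensorProduct.induction_on with
    | zero => simp only [map_zero, Finset.sum_const_zero]; exact Submodule.zero_mem _
    | add x₁ x₂ h₁ h₂ =>
      simp only [map_add, Finset.sum_add_distrib]
      exact Submodule.add_mem _ h₁ h₂
    | tmul u w =>
      have hsum : ∑ σ : Equiv.Perm (Fin r), ∑ τ : Equiv.Perm (Fin s),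
          (TensorProduct.map
            (PiTensorProduct.reindex K (fun _ : Fin r => (V →ₗ[K] V)) σ).toLinearMap
            (PiTensorProduct.reindex K (fun _ : Fin s => (W →ₗ[K] W)) τ).toLinearMap)
            (u ⊗ₜ[K] w)
          = (∑ σ : Equiv.Perm (Fin r),
              (PiTensorProduct.reindex K (fun _ : Fin r => (V →ₗ[K] V)) σ) u) ⊗ₜ[K]
            (∑ τ : Equiv.Perm (Fin s),
              (PiTensorProduct.reindex K (fun _ : Fin s => (W →ₗ[K] W)) τ) w) := by
        rw [TensorProduct.sum_tmul]
        refine Finset.sum_congr rfl fun σ _ => ?_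
        rw [TensorProduct.tmul_sum]
        refine Finset.sum_congr rfl fun τ _ => ?_
        rw [TensorProduct.map_tmul]
        rfl
      rw [hsum]
      have hu := hpowV u
      have hw := hpowW w
      -- tensor of spans
      revert hw
      generalize (∑ τ : Equiv.Perm (Fin s),
        (PiTensorProduct.reindex K (fun _ : Fin s => (W →ₗ[K] W)) τ) w) = q
      revert hu
      generalize (∑ σ : Equiv.Perm (Fin r),
        (PiTensorProduct.reindex K (fun _ : Fin r => (V →ₗ[K] V)) σ) u) = p
      intro hp hq
      induction hp using Submodule.span_induction with
      | mem p hpmem =>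
        induction hq using Submodule.span_induction with
        | mem q hqmem =>
          obtain ⟨ψV, rfl⟩ := hpmem
          obtain ⟨ψW, rfl⟩ := hqmem
          exact Submodule.subset_span ⟨ψV, ψW, rfl⟩
        | zero => rw [TensorProduct.tmul_zero]; exact Submodule.zero_mem _
        | add q₁ q₂ _ _ h₁ h₂ =>
          rw [TensorProduct.tmul_add]; exact Submodule.add_mem _ h₁ h₂
        | smul c q _ h =>
          rw [TensorProduct.tmul_smul]; exact Submodule.smul_mem _ _ h
      | zero => rw [TensorProduct.zero_tmul]; exact Submodule.zero_mem _
      | add p₁ p₂ _ _ h₁ h₂ =>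
        rw [TensorProduct.add_tmul]; exact Submodule.add_mem _ h₁ h₂
      | smul c p _ h =>
        rw [← TensorProduct.smul_tmul']; exact Submodule.smul_mem _ _ h
  -- push through E
  have hEyS : E y ∈ Submodule.span K
      {f | ∃ (ψV : (V →ₗ[K] V)) (ψW : (W →ₗ[K] W)),
        f = TensorProduct.map
              (PiTensorProduct.map (fun _ : Fin r => ψV))
              (PiTensorProduct.map (fun _ : Fin s => ψW))} := by
    have hmem : E y ∈ Submodule.map E (Submodule.span K
        {t : (⨂[K] _ : Fin r, (V →ₗ[K] V)) ⊗[K] (⨂[K] _ : Fin s, (W →ₗ[K] W)) |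
          ∃ (ψV : (V →ₗ[K] V)) (ψW : (W →ₗ[K] W)),
            t = (PiTensorProduct.tprod K (fun _ : Fin r => ψV)) ⊗ₜ[K]
                (PiTensorProduct.tprod K (fun _ : Fin s => ψW))}) :=
      ⟨y, hyP, rfl⟩
    rw [Submodule.map_span] at hmem
    refine Submodule.span_le.mpr ?_ hmem
    rintro f ⟨t, ⟨ψV, ψW, rfl⟩, rfl⟩
    exact Submodule.subset_span ⟨ψV, ψW, (hEpure _ _).symm ▸ rfl⟩
  -- conclude
  have hφ : φ = (((r.factorial * s.factorial : ℕ) : K))⁻¹ • E y := by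
    rw [hEy, ← Nat.cast_smul_eq_nsmul K, smul_smul, inv_mul_cancel₀ hNK, one_smul]
  rw [hφ]
  exact Submodule.smul_mem _ _ hEyS
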